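/- Let $0 < r < 1/16$ and, for $\theta \in \mathbb{R}$, set $S(\theta) = \dfrac{\sqrt{1 - 16r\sin\theta}}{3}$. Then $\int_{-\pi}^{\pi} \frac{r}{15552\, S(\theta)^3}\Big(16 r \cos^2\theta\,\big(9 S(\theta)^2 (3 S(\theta) - 1) + 4 r (16 r - \sin\theta)\big) + 9 S(\theta)^2 \sin\theta\,\big(9 S(\theta)^2 (3 S(\theta) - 1) - 8 r (16 r - \sin\theta)\big)\Big)\, d\theta = 0$. -/

import Mathlib

open Real

theorem s4_key (r n c w : ℝ) (hw : 0 < w) (hw2 : w^2 = 1 - 16*r*n) :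
  r / (15552 * (w/3)^3) * (16*r*c^2*(9*(w/3)^2*(3*(w/3)-1)+4*r*(16*r-n))
    + 9*(w/3)^2*n*(9*(w/3)^2*(3*(w/3)-1)-8*r*(16*r-n)))
  = r/576 * ((n*(1-16*r*n) + -c*(-(16*r*c)))
     + ((-n*(128*r^2+1-24*r*n)+c*(-(24*r*c)))*w - c*(128*r^2+1-24*r*n)*(-(16*r*c)/(2*w)))/w^2) := by
  have hw0 : w ≠ 0 := hw.ne'
  field_simp
  linear_combination (93312*r*n*w^3 - 93312*r*n*w^2 + 746496*r^2*c^2) * hw2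

theorem s4_J7_integral_zero
    (r : ℝ) (hr : 0 < r) (hr' : r < 1 / 16)
    (S : ℝ → ℝ) (hS : ∀ θ : ℝ, S θ = Real.sqrt (1 - 16 * r * Real.sin θ) / 3) :
    ∫ θ in (-Real.pi)..Real.pi,
      r / (15552 * S θ ^ 3) *
        (16 * r * Real.cos θ ^ 2 *
            (9 * S θ ^ 2 * (3 * S θ - 1) + 4 * r * (16 * r - Real.sin θ)) +
          9 * S θ ^ 2 * Real.sin θ *
            (9 * S θ ^ 2 * (3 * S θ - 1) - 8 * r * (16 * r - Real.sin θ))) = 0 := by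
  have hgpos : ∀ θ : ℝ, (0:ℝ) < 1 - 16 * r * Real.sin θ := by
    intro θ
    nlinarith [Real.sin_le_one θ, Real.neg_one_le_sin θ]
  set F : ℝ → ℝ := fun t => r/576 * (-(Real.cos t) * (1 - 16*r*Real.sin t)
      + Real.cos t * (128*r^2 + 1 - 24*r*Real.sin t) / Real.sqrt (1 - 16*r*Real.sin t)) with hF
  set f : ℝ → ℝ := fun θ =>
      r / (15552 * (Real.sqrt (1 - 16 * r * Real.sin θ) / 3) ^ 3) *
        (16 * r * Real.cos θ ^ 2 *
            (9 * (Real.sqrt (1 - 16 * r * Real.sin θ) / 3) ^ 2 *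
              (3 * (Real.sqrt (1 - 16 * r * Real.sin θ) / 3) - 1) + 4 * r * (16 * r - Real.sin θ)) +
          9 * (Real.sqrt (1 - 16 * r * Real.sin θ) / 3) ^ 2 * Real.sin θ *
            (9 * (Real.sqrt (1 - 16 * r * Real.sin θ) / 3) ^ 2 *
              (3 * (Real.sqrt (1 - 16 * r * Real.sin θ) / 3) - 1)
              - 8 * r * (16 * r - Real.sin θ))) with hf
  have hderiv : ∀ θ : ℝ, HasDerivAt F (f θ) θ := by
    intro θ
    have hg : (0:ℝ) < 1 - 16*r*Real.sin θ := hgpos θ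
    have hw : (0:ℝ) < Real.sqrt (1 - 16*r*Real.sin θ) := Real.sqrt_pos.mpr hg
    have hw2 : (Real.sqrt (1 - 16*r*Real.sin θ))^2 = 1 - 16*r*Real.sin θ := Real.sq_sqrt hg.le
    have hgd : HasDerivAt (fun t : ℝ => 1 - 16*r*Real.sin t) (-(16*r*Real.cos θ)) θ := by
      simpa using ((Real.hasDerivAt_sin θ).const_mul (16*r)).const_sub 1
    have hsq : HasDerivAt (fun t : ℝ => Real.sqrt (1 - 16*r*Real.sin t))
        (-(16*r*Real.cos θ) / (2*Real.sqrt (1 - 16*r*Real.sin θ))) θ := hgd.sqrt hg.ne'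
    have h1 : HasDerivAt (fun t : ℝ => -(Real.cos t) * (1 - 16*r*Real.sin t))
        (Real.sin θ * (1 - 16*r*Real.sin θ) + -(Real.cos θ) * (-(16*r*Real.cos θ))) θ := by
      simpa [Pi.mul_def, Pi.neg_def] using ((Real.hasDerivAt_cos θ).neg.mul hgd)
    have h2 : HasDerivAt (fun t : ℝ => Real.cos t * (128*r^2 + 1 - 24*r*Real.sin t))
        (-(Real.sin θ) * (128*r^2 + 1 - 24*r*Real.sin θ) + Real.cos θ * (-(24*r*Real.cos θ))) θ := by
      have h2' : HasDerivAt (fun t : ℝ => 128*r^2 + 1 - 24*r*Real.sin t) (-(24*r*Real.cos θ)) θ := by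
        simpa using ((Real.hasDerivAt_sin θ).const_mul (24*r)).const_sub (128*r^2+1)
      simpa [Pi.mul_def] using (Real.hasDerivAt_cos θ).mul h2'
    have h3 := h2.div hsq hw.ne'
    have h4 := (h1.add h3).const_mul (r/576)
    have hkey := s4_key r (Real.sin θ) (Real.cos θ) (Real.sqrt (1 - 16*r*Real.sin θ)) hw hw2
    rw [hf]
    simp only []
    rw [hkey]
    exact h4
  have hcont : Continuous f := by
    have h1 : Continuous fun θ : ℝ => Real.sqrt (1 - 16*r*Real.sin θ) :=
      Real.continuous_sqrt.comp (by fun_prop)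
    have hne : ∀ θ : ℝ, 15552 * (Real.sqrt (1 - 16 * r * Real.sin θ) / 3) ^ 3 ≠ 0 := by
      intro θ
      have hw : (0:ℝ) < Real.sqrt (1 - 16*r*Real.sin θ) := Real.sqrt_pos.mpr (hgpos θ)
      positivity
    rw [hf]
    apply Continuous.mul
    · exact Continuous.div continuous_const
        (continuous_const.mul ((h1.div_const 3).pow 3)) hne
    · fun_prop
  have hint : IntervalIntegrable f MeasureTheory.volume (-Real.pi) Real.pi :=
    hcont.intervalIntegrable _ _
  have heq := intervalIntegral.integral_eq_sub_of_hasDerivAt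
    (f := F) (f' := f) (a := -Real.pi) (b := Real.pi)
    (fun x _ => hderiv x) hint
  have hrw : (∫ θ in (-Real.pi)..Real.pi,
      r / (15552 * S θ ^ 3) *
        (16 * r * Real.cos θ ^ 2 *
            (9 * S θ ^ 2 * (3 * S θ - 1) + 4 * r * (16 * r - Real.sin θ)) +
          9 * S θ ^ 2 * Real.sin θ *
            (9 * S θ ^ 2 * (3 * S θ - 1) - 8 * r * (16 * r - Real.sin θ))))
      = ∫ θ in (-Real.pi)..Real.pi, f θ := by
    apply intervalIntegral.integral_congr
    intro θ _
    simp only [hf, hS θ]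
  rw [hrw, heq, hF]
  simp [Real.sin_pi, Real.cos_pi, Real.sin_neg, Real.cos_neg, Real.sqrt_one]
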